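/- Let f : A ⥤ B be a functor and I f : (f/≅ B) ⥤ B the projection of the iso-comma category to B, sending (a, b, β : f a ≅ b) to b. Then I f is an isofibration, and if f is moreover a Grothendieck fibration up to isomorphism (a pseudo-fibration: every β : b ⟶ f a admits a lift α : a' ⟶ a cartesian up to isomorphism, meaning f α ≅ β in the appropriate sense, i.e. f α = β' for some β' isomorphic to β over a), then I f is a (strict) Grothendieck fibration. -/

import Mathlib

open CategoryTheory

universe v₁ v₂ u₁ u₂

variable {A : Type u₁} {B : Type u₂} [Category.{v₁} A] [Category.{v₂} B]

/-- `f` is an isofibration. -/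
def IsIsofibration (f : A ⥤ B) : Prop :=
  ∀ (a : A) (b : B) (β : b ≅ f.obj a),
    ∃ (a' : A) (σ : a' ≅ a) (h : f.obj a' = b),
      f.map σ.hom = eqToHom h ≫ β.hom

/-- `α : a' ⟶ a` is `f`-cartesian. -/
def IsCartesian (f : A ⥤ B) {a' a : A} (α : a' ⟶ a) : Prop :=
  ∀ {y : A} (τ' : y ⟶ a) (g : f.obj y ⟶ f.obj a'),
    f.map τ' = g ≫ f.map α →
      ∃! τ : y ⟶ a', f.map τ = g ∧ τ ≫ α = τ'

/-- `f` is a (strict) Grothendieck fibration. -/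
def IsGrothendieckFibration (f : A ⥤ B) : Prop :=
  ∀ (a : A) (b : B) (β : b ⟶ f.obj a),
    ∃ (a' : A) (α : a' ⟶ a) (h : f.obj a' = b),
      f.map α = eqToHom h ≫ β ∧ IsCartesian f α

/-- `f` is a pseudo-fibration: every `β : b ⟶ f a` admits a cartesian lift up to isomorphism,
i.e. a cartesian `α : a' ⟶ a` together with an isomorphism `θ : f a' ≅ b` such that
`f α = θ.hom ≫ β`. -/
def IsPseudoFibration (f : A ⥤ B) : Prop :=
  ∀ (a : A) (b : B) (β : b ⟶ f.obj a),
    ∃ (a' : A) (α : a' ⟶ a) (θ : f.obj a' ≅ b),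
      f.map α = θ.hom ≫ β ∧ IsCartesian f α

/-- The iso-comma category `f/≅ B`. -/
def IsoComma (f : A ⥤ B) : Type max u₁ u₂ v₂ :=
  ObjectProperty.FullSubcategory (fun X : Comma f (𝟭 B) => IsIso X.hom)

instance (f : A ⥤ B) : Category (IsoComma f) := ObjectProperty.FullSubcategory.category _

/-- The projection `I f : f/≅ B ⥤ B`, `(a, b, β : f a ≅ b) ↦ b`. -/
def isoCommaToBase (f : A ⥤ B) : IsoComma f ⥤ B :=
  ObjectProperty.ι _ ⋙ Comma.snd f (𝟭 B)

/-- `I f : f/≅ B ⥤ B` is always an isofibration, and if `f` is a pseudo-fibration then `I f`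
is a (strict) Grothendieck fibration. -/
theorem stmt19 (f : A ⥤ B) :
    IsIsofibration (isoCommaToBase f) ∧
      (IsPseudoFibration f → IsGrothendieckFibration (isoCommaToBase f)) := by
  constructor
  · -- isofibration
    intro X b β
    change b ≅ X.obj.right at β
    haveI : IsIso X.obj.hom := X.property
    refine ⟨⟨⟨X.obj.left, b, X.obj.hom ≫ β.inv⟩, (inferInstance : IsIso (X.obj.hom ≫ β.inv))⟩,
      ⟨⟨⟨𝟙 _, β.hom, by simp⟩⟩, ⟨⟨𝟙 _, β.inv, by simp⟩⟩, ?_, ?_⟩, rfl, ?_⟩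
    · exact ObjectProperty.hom_ext _ (CommaMorphism.ext (Category.id_comp _) β.hom_inv_id)
    · exact ObjectProperty.hom_ext _ (CommaMorphism.ext (Category.id_comp _) β.inv_hom_id)
    · exact (Category.id_comp _).symm
  · intro hpf X b β
    change b ⟶ X.obj.right at β
    haveI : IsIso X.obj.hom := X.property
    obtain ⟨a', α, θ, hα, hcart⟩ := hpf X.obj.left b (β ≫ inv X.obj.hom)
    refine ⟨⟨⟨a', b, θ.hom⟩, (inferInstance : IsIso θ.hom)⟩, ⟨⟨α, β, by simp [hα]⟩⟩, rfl, by
      exact (Category.id_comp _).symm, ?_⟩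
    intro Z τ' g hg
    change Z.obj.right ⟶ b at g
    haveI : IsIso Z.obj.hom := Z.property
    have hg' : τ'.hom.right = g ≫ β := hg
    have hw : f.map τ'.hom.left = (Z.obj.hom ≫ g ≫ θ.inv) ≫ f.map α := by
      have h1 := τ'.hom.w
      simp only [Functor.id_map] at h1
      have h2 : f.map τ'.hom.left = Z.obj.hom ≫ τ'.hom.right ≫ inv X.obj.hom := by
        rw [← Category.assoc, IsIso.eq_comp_inv]; exact h1
      rw [h2, hg', hα]; simp
    obtain ⟨τ, ⟨hτ1, hτ2⟩, huniq⟩ := hcart τ'.hom.left (Z.obj.hom ≫ g ≫ θ.inv) hw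
    refine ⟨⟨⟨τ, g, by simp [hτ1]⟩⟩, ⟨rfl, ?_⟩, ?_⟩
    · exact ObjectProperty.hom_ext _ (CommaMorphism.ext hτ2 hg'.symm)
    · rintro σ ⟨hσ1, hσ2⟩
      have hσr : σ.hom.right = g := hσ1
      have hσl : σ.hom.left ≫ α = τ'.hom.left := congrArg (fun t => t.hom.left) hσ2
      have hσw : f.map σ.hom.left = Z.obj.hom ≫ g ≫ θ.inv := by
        have h3 := σ.hom.w
        simp only [Functor.id_map, hσr] at h3
        rw [← Category.assoc, Iso.eq_comp_inv]; exact h3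
      exact ObjectProperty.hom_ext _ (CommaMorphism.ext (huniq σ.hom.left ⟨hσw, hσl⟩) hσr)
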